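/- Let K be a real number with 1 ≤ K < 7/4, and let A ⊆ F_2^n be a nonempty set with |A + A| ≤ K·|A|. Then there exists an affine subspace V ⊆ F_2^n with A ⊆ V and |V| ≤ K·|A|. -/

import Mathlib

open Finset Pointwise

abbrev F2 (n : ℕ) := Fin n → ZMod 2

/-- The standard basis vector `e i` of `F_2^n`. -/
def stdBasis {n : ℕ} (i : Fin n) : F2 n := Pi.single i 1

/-- `A` is a downset: whenever `x i = 0` and `x + e i ∈ A`, also `x ∈ A`. -/
def IsDownset {n : ℕ} (A : Finset (F2 n)) : Prop :=
  ∀ x : F2 n, ∀ i : Fin n, x i = 0 → x + stdBasis i ∈ A → x ∈ A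

/-- `A` is shift-minimal: whenever `i < j`, `x i = x j = 0` and `x + e j ∈ A`,
also `x + e i ∈ A`. -/
def IsShiftMinimal {n : ℕ} (A : Finset (F2 n)) : Prop :=
  ∀ x : F2 n, ∀ i j : Fin n, i < j → x i = 0 → x j = 0 →
    x + stdBasis j ∈ A → x + stdBasis i ∈ A

/-- The Hamming ball of radius `r` in `F_2^n`. -/
def hamBall (n r : ℕ) : Finset (F2 n) := Finset.univ.filter fun x => hammingNorm x ≤ r


lemma F2_add_self {n : ℕ} (z : F2 n) : z + z = 0 := by
  funext i; exact (by decide : ∀ a : ZMod 2, a + a = 0) _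

lemma F2_pair {n : ℕ} (c t s : F2 n) : (c + s) + (t + s) = c + t := by
  rw [show (c + s) + (t + s) = (c + t) + (s + s) from by abel, F2_add_self, add_zero]

lemma F2_cancel {n : ℕ} (p q : F2 n) : (p + q) + q = p := by
  rw [add_assoc, F2_add_self, add_zero]

lemma F2_rot {n : ℕ} {a b c : F2 n} (h : a + b = c) : c + a = b := by
  rw [← h, show a + b + a = b + (a + a) from by abel, F2_add_self, add_zero]

lemma F2_neg {n : ℕ} (z : F2 n) : -z = z := neg_eq_of_add_eq_zero_right (F2_add_self z)

lemma three_mem_two {n : ℕ} (B : Finset (F2 n)) (h0 : (0 : F2 n) ∈ B)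
    (hS : 4 * (B + B).card < 7 * B.card) :
    ∀ b1 ∈ B, ∀ b2 ∈ B, ∀ b3 ∈ B, b1 + b2 + b3 ∈ B + B := by
  classical
  intro b1 hb1 b2 hb2 b3 hb3
  by_contra hx
  set S : Finset (F2 n) := B + B with hSdef
  have hBS : ∀ a ∈ B, ∀ b ∈ B, a + b ∈ S := fun a ha b hb => Finset.add_mem_add ha hb
  have hBsub : ∀ b ∈ B, b ∈ S := fun b hb => by
    have := hBS b hb 0 h0; rwa [add_zero] at this
  set x : F2 n := b1 + b2 + b3 with hxdef
  set u : F2 n := b1 + b2 with hu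
  set v : F2 n := b1 + b3 with hv
  set w : F2 n := b2 + b3 with hw
  -- identities
  have hub3 : u + b3 = x := hxdef.symm
  have hvb2 : v + b2 = x := by rw [hv, hxdef, hu]; abel
  have hwb1 : w + b1 = x := by rw [hw, hxdef, hu]; abel
  have hxu : x + u = b3 := F2_rot hub3
  have hxv : x + v = b2 := F2_rot hvb2
  have hxw : x + w = b1 := F2_rot hwb1
  have huvw : u + v = w := by
    rw [hu, hv, hw, show (b1+b2)+(b1+b3) = (b2+b3)+(b1+b1) from by abel, F2_add_self, add_zero]
  -- non-membership facts
  have hxne : ∀ b ∈ B, x ≠ b := fun b hb h => hx (h ▸ hBsub b hb)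
  have hune : u ≠ 0 := by
    intro h; apply hx; rw [hxdef, h, zero_add]; exact hBsub b3 hb3
  have hvne : v ≠ 0 := by
    intro h; apply hx; rw [← hvb2, h, zero_add]; exact hBsub b2 hb2
  have hwne : w ≠ 0 := by
    intro h; apply hx; rw [← hwb1, h, zero_add]; exact hBsub b1 hb1
  have hvb3 : v + b3 = b1 := by rw [hv]; exact F2_cancel b1 b3
  have hwb3 : w + b3 = b2 := by
    rw [hw, show b2 + b3 + b3 = b2 + (b3 + b3) from by abel, F2_add_self, add_zero]
  have hwb2 : w + b2 = b3 := by
    rw [hw, show b2 + b3 + b2 = b3 + (b2 + b2) from by abel, F2_add_self, add_zero]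
  have huvne : u ≠ v := by
    intro h; apply hx; rw [hxdef, h, hvb3]; exact hBsub b1 hb1
  have huwne : u ≠ w := by
    intro h; apply hx; rw [hxdef, h, hwb3]; exact hBsub b2 hb2
  have hvwne : v ≠ w := by
    intro h; apply hx; rw [← hvb2, h, hwb2]; exact hBsub b3 hb3
  have hb12 : b1 ≠ b2 := fun h => hune (by rw [hu, h, F2_add_self])
  have hb13 : b1 ≠ b3 := fun h => hvne (by rw [hv, h, F2_add_self])
  have hb23 : b2 ≠ b3 := fun h => hwne (by rw [hw, h, F2_add_self])
  -- the Klein four-subgroup V = {0, u, v, w}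
  set V : Submodule (ZMod 2) (F2 n) := Submodule.span (ZMod 2) ({u, v} : Set (F2 n)) with hV
  have huV : u ∈ V := Submodule.subset_span (Set.mem_insert _ _)
  have hvV : v ∈ V := Submodule.subset_span (Set.mem_insert_of_mem _ rfl)
  have hwV : w ∈ V := huvw ▸ Submodule.add_mem V huV hvV
  have hmemV : ∀ z ∈ V, z = 0 ∨ z = u ∨ z = v ∨ z = w := by
    intro z hz
    rw [hV, Submodule.mem_span_pair] at hz
    obtain ⟨a, b, hab⟩ := hz
    rcases (by decide : ∀ a : ZMod 2, a = 0 ∨ a = 1) a with rfl|rfl <;>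
      rcases (by decide : ∀ a : ZMod 2, a = 0 ∨ a = 1) b with rfl|rfl <;>
        simp only [zero_smul, one_smul, zero_add, add_zero] at hab
    · exact Or.inl hab.symm
    · exact Or.inr (Or.inr (Or.inl hab.symm))
    · exact Or.inr (Or.inl hab.symm)
    · exact Or.inr (Or.inr (Or.inr (by rw [← hab, huvw])))
  set π := V.mkQ with hπ
  have hdiff : ∀ z z' : F2 n, π z = π z' ↔ z + z' ∈ V := by
    intro z z'
    rw [hπ, Submodule.mkQ_apply, Submodule.mkQ_apply, Submodule.Quotient.eq,
      sub_eq_add_neg, F2_neg]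
  have hfour : ∀ z z' : F2 n, π z = π z' → z' = z ∨ z' = z + u ∨ z' = z + v ∨ z' = z + w := by
    intro z z' h
    have hmem : z + z' ∈ V := (hdiff z z').1 h
    have hz' : z' = z + (z + z') := by rw [← add_assoc, F2_add_self, zero_add]
    rcases hmemV _ hmem with h'|h'|h'|h' <;> rw [h'] at hz'
    · exact Or.inl (by rw [hz', add_zero])
    · exact Or.inr (Or.inl hz')
    · exact Or.inr (Or.inr (Or.inl hz'))
    · exact Or.inr (Or.inr (Or.inr hz'))
  have hshift : ∀ (z : F2 n), ∀ s ∈ V, π (z + s) = π z := by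
    intro z s hs
    exact (hdiff _ _).2 (by rw [show z + s + z = s + (z + z) from by abel, F2_add_self, add_zero]; exact hs)
  have hπ21 : π b2 = π b1 := (hdiff _ _).2 (by rw [show b2 + b1 = b1 + b2 from add_comm _ _, ← hu]; exact huV)
  have hπ31 : π b3 = π b1 := (hdiff _ _).2 (by rw [show b3 + b1 = b1 + b3 from add_comm _ _, ← hv]; exact hvV)
  have hπx1 : π x = π b1 := (hdiff _ _).2 (by rw [show x + b1 = w from by rw [← hwb1, F2_cancel]]; exact hwV)
  -- bound (a): 2|B| ≤ |S| + |L|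
  have hxnB : ∀ c ∈ B, x + c ∉ B := by
    intro c hc hmem
    apply hx
    have h1 := hBS (x + c) hmem c hc
    rwa [F2_cancel] at h1
  set L := B.filter (fun c => c + u ∉ B ∧ c + v ∉ B ∧ c + w ∉ B) with hLdef
  have hLsub : L ⊆ B := Finset.filter_subset _ _
  have hDS : ∀ c ∈ B \ L, x + c ∈ S := by
    intro c hc
    rw [Finset.mem_sdiff, hLdef, Finset.mem_filter] at hc
    obtain ⟨hcB, hc2⟩ := hc
    have h3 : c + u ∈ B ∨ c + v ∈ B ∨ c + w ∈ B := by tauto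
    rcases h3 with h|h|h
    · have h1 := hBS _ h _ hb3
      rwa [show (c + u) + b3 = x + c from by rw [← hxu, F2_pair, add_comm]] at h1
    · have h1 := hBS _ h _ hb2
      rwa [show (c + v) + b2 = x + c from by rw [← hxv, F2_pair, add_comm]] at h1
    · have h1 := hBS _ h _ hb1
      rwa [show (c + w) + b1 = x + c from by rw [← hxw, F2_pair, add_comm]] at h1
  have ha : 2 * B.card ≤ S.card + L.card := by
    have himg : ((B \ L).image (fun c => x + c)).card = B.card - L.card := by
      rw [Finset.card_image_of_injective _ (add_right_injective x), Finset.card_sdiff_of_subset hLsub]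
    have hsub : B ∪ (B \ L).image (fun c => x + c) ⊆ S := by
      intro z hz
      rcases Finset.mem_union.1 hz with h|h
      · exact hBsub z h
      · obtain ⟨c, hc, rfl⟩ := Finset.mem_image.1 h
        exact hDS c hc
    have hdisj : Disjoint B ((B \ L).image (fun c => x + c)) := by
      rw [Finset.disjoint_right]
      rintro z hz hzB
      obtain ⟨c, hc, rfl⟩ := Finset.mem_image.1 hz
      exact hxnB c (Finset.mem_sdiff.1 hc).1 hzB
    have h1 := Finset.card_le_card hsub
    rw [Finset.card_union_of_disjoint hdisj, himg] at h1
    have hLB : L.card ≤ B.card := Finset.card_le_card hLsub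
    omega
  -- fiberwise machinery
  set Bf := B.image π with hBfdef
  set fB := fun q => (B.filter fun c => π c = q).card with hfBdef
  set fS := fun q => (S.filter fun c => π c = q).card with hfSdef
  have hBcard : B.card = ∑ q ∈ Bf, fB q :=
    Finset.card_eq_sum_card_fiberwise (fun c hc => Finset.mem_image_of_mem _ hc)
  have hsum : ∀ t : F2 n, (∀ c ∈ B, c + t ∈ S) → (∑ q ∈ Bf, fS (q + π t)) ≤ S.card := by
    intro t ht
    have hScard : S.card = ∑ q ∈ S.image π, fS q :=
      Finset.card_eq_sum_card_fiberwise (fun c hc => Finset.mem_image_of_mem _ hc)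
    rw [hScard]
    have hinj : ∀ a ∈ Bf, ∀ b ∈ Bf, a + π t = b + π t → a = b := fun a _ b _ h =>
      add_right_cancel h
    refine le_trans (le_of_eq (Finset.sum_image (g := fun q => q + π t) hinj).symm)
      (Finset.sum_le_sum_of_subset ?_)
    intro q hq
    obtain ⟨q0, hq0, rfl⟩ := Finset.mem_image.1 hq
    obtain ⟨c, hc, rfl⟩ := Finset.mem_image.1 hq0
    rw [← map_add]
    exact Finset.mem_image_of_mem _ (ht c hc)
  -- per-fiber lower bounds
  have hfiber3 : ∀ q ∈ Bf, 3 + (if 2 ≤ fB q then 1 else 0) ≤ fS (q + π b1) := by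
    intro q hq
    obtain ⟨c, hc, rfl⟩ := Finset.mem_image.1 hq
    by_cases h2f : 2 ≤ fB (π c)
    · -- four elements: c+b1, c+b2, c+b3, c+x
      have h2f' : 1 < (B.filter fun c' => π c' = π c).card := by
        simp only [hfBdef] at h2f; omega
      obtain ⟨c₁, hc₁, c₂, hc₂, hcne⟩ := Finset.one_lt_card.1 h2f'
      simp only [Finset.mem_filter] at hc₁ hc₂
      have hcx : c + x ∈ S := by
        have key : ∀ c' , c' ∈ B → π c' = π c → c' ≠ c → c + x ∈ S := by
          intro c' hc'B hπc' hc'ne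
          rcases hfour c c' hπc'.symm with h|h|h|h
          · exact absurd h hc'ne
          · have h1 := hBS _ (h ▸ hc'B) _ hb3
            rwa [← hxu, F2_pair] at h1
          · have h1 := hBS _ (h ▸ hc'B) _ hb2
            rwa [← hxv, F2_pair] at h1
          · have h1 := hBS _ (h ▸ hc'B) _ hb1
            rwa [← hxw, F2_pair] at h1
        by_cases h1 : c₁ = c
        · exact key c₂ hc₂.1 hc₂.2 (h1 ▸ hcne.symm)
        · exact key c₁ hc₁.1 hc₁.2 h1
      have hsub4 : ({c + b1, c + b2, c + b3, c + x} : Finset (F2 n)) ⊆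
          S.filter (fun z => π z = π c + π b1) := by
        intro z hz
        simp only [Finset.mem_insert, Finset.mem_singleton] at hz
        rcases hz with rfl|rfl|rfl|rfl
        · exact Finset.mem_filter.2 ⟨hBS c hc b1 hb1, by rw [map_add]⟩
        · exact Finset.mem_filter.2 ⟨hBS c hc b2 hb2, by rw [map_add, hπ21]⟩
        · exact Finset.mem_filter.2 ⟨hBS c hc b3 hb3, by rw [map_add, hπ31]⟩
        · exact Finset.mem_filter.2 ⟨hcx, by rw [map_add, hπx1]⟩
      have hcard4 : ({c + b1, c + b2, c + b3, c + x} : Finset (F2 n)).card = 4 := by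
        rw [Finset.card_insert_of_notMem (by
            simp [hb12, hb13, (hxne b1 hb1).symm] : c + b1 ∉ _),
          Finset.card_insert_of_notMem (by
            simp [hb23, (hxne b2 hb2).symm] : c + b2 ∉ _),
          Finset.card_insert_of_notMem (by
            simp [(hxne b3 hb3).symm] : c + b3 ∉ _),
          Finset.card_singleton]
      have h4 := Finset.card_le_card hsub4
      rw [hcard4] at h4
      simp only [h2f, if_true, hfSdef]
      omega
    · have hsub3 : ({c + b1, c + b2, c + b3} : Finset (F2 n)) ⊆
          S.filter (fun z => π z = π c + π b1) := by
        intro z hz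
        simp only [Finset.mem_insert, Finset.mem_singleton] at hz
        rcases hz with rfl|rfl|rfl
        · exact Finset.mem_filter.2 ⟨hBS c hc b1 hb1, by rw [map_add]⟩
        · exact Finset.mem_filter.2 ⟨hBS c hc b2 hb2, by rw [map_add, hπ21]⟩
        · exact Finset.mem_filter.2 ⟨hBS c hc b3 hb3, by rw [map_add, hπ31]⟩
      have hcard3 : ({c + b1, c + b2, c + b3} : Finset (F2 n)).card = 3 := by
        rw [Finset.card_insert_of_notMem (by simp [hb12, hb13] : c + b1 ∉ _),
          Finset.card_insert_of_notMem (by simp [hb23] : c + b2 ∉ _),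
          Finset.card_singleton]
      have h3 := Finset.card_le_card hsub3
      rw [hcard3] at h3
      simp only [h2f, if_false, hfSdef]
      omega
  set M := Bf.filter (fun q => 2 ≤ fB q) with hMdef
  have hb' : 3 * Bf.card + M.card ≤ S.card := by
    calc 3 * Bf.card + M.card = ∑ q ∈ Bf, (3 + if 2 ≤ fB q then 1 else 0) := by
          rw [Finset.sum_add_distrib, Finset.sum_const, smul_eq_mul, mul_comm,
            ← Finset.card_filter, hMdef]
      _ ≤ ∑ q ∈ Bf, fS (q + π b1) := Finset.sum_le_sum hfiber3
      _ ≤ S.card := hsum b1 (fun c hc => hBS c hc b1 hb1)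
  -- singleton cosets
  have hone : ∀ q ∈ Bf, 1 ≤ fB q := by
    intro q hq
    obtain ⟨c, hc, rfl⟩ := Finset.mem_image.1 hq
    rw [hfBdef]
    exact Finset.card_pos.2 ⟨c, Finset.mem_filter.2 ⟨hc, rfl⟩⟩
  set SG := Bf.filter (fun q => fB q = 1) with hSGdef
  have hNsplit : SG.card + M.card = Bf.card := by
    have h := Finset.card_filter_add_card_filter_not (s := Bf) (p := fun q => fB q = 1)
    have heq : Bf.filter (fun a => ¬ fB a = 1) = M := by
      rw [hMdef]
      apply Finset.filter_congr
      intro q hq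
      have h1 := hone q hq
      constructor
      · intro h2; omega
      · intro h2; omega
    rw [heq, ← hSGdef] at h
    exact h
  have hn1p : L.card ≤ SG.card := by
    apply Finset.card_le_card_of_injOn π
    · intro c hcL
      simp only [Finset.mem_coe, hLdef, Finset.mem_filter] at hcL
      obtain ⟨hcB, hcu, hcv, hcw⟩ := hcL
      rw [Finset.mem_coe, hSGdef, Finset.mem_filter]
      refine ⟨Finset.mem_image_of_mem _ hcB, ?_⟩
      simp only [hfBdef]
      rw [show B.filter (fun c' => π c' = π c) = {c} from ?_, Finset.card_singleton]
      apply Finset.eq_singleton_iff_unique_mem.2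
      refine ⟨Finset.mem_filter.2 ⟨hcB, rfl⟩, ?_⟩
      intro c' hc'
      obtain ⟨hc'B, hπc'⟩ := Finset.mem_filter.1 hc'
      rcases hfour c c' hπc'.symm with h|h|h|h
      · exact h
      · exact absurd (h ▸ hc'B) hcu
      · exact absurd (h ▸ hc'B) hcv
      · exact absurd (h ▸ hc'B) hcw
    · intro c hcL c' hc'L hπeq
      simp only [Finset.coe_filter, Set.mem_setOf_eq, hLdef, Finset.mem_coe,
        Finset.mem_filter] at hcL hc'L
      obtain ⟨hcB, hcu, hcv, hcw⟩ := hcL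
      obtain ⟨hc'B, _, _, _⟩ := hc'L
      rcases hfour c c' hπeq with h|h|h|h
      · exact h.symm
      · exact absurd (h ▸ hc'B) hcu
      · exact absurd (h ▸ hc'B) hcv
      · exact absurd (h ▸ hc'B) hcw
  have hpn1 : SG.card ≤ L.card := by
    apply Finset.card_le_card_of_surjOn π
    intro q hq
    simp only [Finset.coe_filter, Set.mem_setOf_eq, hSGdef] at hq
    obtain ⟨hqBf, hq1⟩ := hq
    obtain ⟨c, hcB, rfl⟩ := Finset.mem_image.1 hqBf
    have hcL : c ∈ L := by
      rw [hLdef, Finset.mem_filter]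
      refine ⟨hcB, ?_, ?_, ?_⟩ <;> intro hmem
      · have : 2 ≤ fB (π c) := by
          rw [hfBdef]
          apply Finset.one_lt_card.2
          exact ⟨c, Finset.mem_filter.2 ⟨hcB, rfl⟩, c + u,
            Finset.mem_filter.2 ⟨hmem, hshift c u huV⟩,
            fun h => hune (left_eq_add.1 h)⟩
        omega
      · have : 2 ≤ fB (π c) := by
          rw [hfBdef]
          apply Finset.one_lt_card.2
          exact ⟨c, Finset.mem_filter.2 ⟨hcB, rfl⟩, c + v,
            Finset.mem_filter.2 ⟨hmem, hshift c v hvV⟩,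
            fun h => hvne (left_eq_add.1 h)⟩
        omega
      · have : 2 ≤ fB (π c) := by
          rw [hfBdef]
          apply Finset.one_lt_card.2
          exact ⟨c, Finset.mem_filter.2 ⟨hcB, rfl⟩, c + w,
            Finset.mem_filter.2 ⟨hmem, hshift c w hwV⟩,
            fun h => hwne (left_eq_add.1 h)⟩
        omega
    exact ⟨c, hcL, rfl⟩
  -- cap bounds on fibers
  have hfibsub : ∀ c, c ∈ B → B.filter (fun c' => π c' = π c) ⊆ {c, c + u, c + v, c + w} := by
    intro c _ c' hc'
    obtain ⟨_, hπc'⟩ := Finset.mem_filter.1 hc'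
    rcases hfour c c' hπc'.symm with h|h|h|h <;> simp [h]
  have hquadcard : ∀ c : F2 n, ({c, c + u, c + v, c + w} : Finset (F2 n)).card ≤ 4 := by
    intro c
    have e1 := Finset.card_insert_le c ({c + u, c + v, c + w} : Finset (F2 n))
    have e2 := Finset.card_insert_le (c + u) ({c + v, c + w} : Finset (F2 n))
    have e3 := Finset.card_insert_le (c + v) ({c + w} : Finset (F2 n))
    have e4 : ({c + w} : Finset (F2 n)).card = 1 := Finset.card_singleton _
    omega
  have hcap4 : ∀ q ∈ Bf, fB q ≤ 4 := by
    intro q hq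
    obtain ⟨c, hc, rfl⟩ := Finset.mem_image.1 hq
    rw [hfBdef]
    exact le_trans (Finset.card_le_card (hfibsub c hc)) (hquadcard c)
  -- case split on whether some coset is full
  by_cases hfull : ∃ c ∈ B, c + u ∈ B ∧ c + v ∈ B ∧ c + w ∈ B
  · -- Case B: a full coset exists
    obtain ⟨c0, hc0, hc0u, hc0v, hc0w⟩ := hfull
    have hfiberB4 : ∀ q ∈ Bf, 4 ≤ fS (q + π c0) := by
      intro q hq
      obtain ⟨c, hc, rfl⟩ := Finset.mem_image.1 hq
      have hsub4 : ({c + c0, c + (c0 + u), c + (c0 + v), c + (c0 + w)} : Finset (F2 n)) ⊆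
          S.filter (fun z => π z = π c + π c0) := by
        intro z hz
        simp only [Finset.mem_insert, Finset.mem_singleton] at hz
        rcases hz with rfl|rfl|rfl|rfl
        · exact Finset.mem_filter.2 ⟨hBS c hc c0 hc0, by rw [map_add]⟩
        · exact Finset.mem_filter.2 ⟨hBS c hc _ hc0u, by rw [map_add, hshift c0 u huV]⟩
        · exact Finset.mem_filter.2 ⟨hBS c hc _ hc0v, by rw [map_add, hshift c0 v hvV]⟩
        · exact Finset.mem_filter.2 ⟨hBS c hc _ hc0w, by rw [map_add, hshift c0 w hwV]⟩
      have hcard4 : ({c + c0, c + (c0 + u), c + (c0 + v), c + (c0 + w)} : Finset (F2 n)).card = 4 := by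
        have k1 : c0 ≠ c0 + u := fun h => hune (left_eq_add.1 h)
        have k2 : c0 ≠ c0 + v := fun h => hvne (left_eq_add.1 h)
        have k3 : c0 ≠ c0 + w := fun h => hwne (left_eq_add.1 h)
        have k4 : c0 + u ≠ c0 + v := fun h => huvne (add_left_cancel h)
        have k5 : c0 + u ≠ c0 + w := fun h => huwne (add_left_cancel h)
        have k6 : c0 + v ≠ c0 + w := fun h => hvwne (add_left_cancel h)
        rw [Finset.card_insert_of_notMem (by simp [k1, k2, k3]),
          Finset.card_insert_of_notMem (by simp [k4, k5]),
          Finset.card_insert_of_notMem (by simp [k6]),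
          Finset.card_singleton]
      have h4 := Finset.card_le_card hsub4
      rw [hcard4] at h4
      simpa [hfSdef] using h4
    have hd : 4 * Bf.card ≤ S.card := by
      calc 4 * Bf.card = ∑ _q ∈ Bf, 4 := by rw [Finset.sum_const, smul_eq_mul, mul_comm]
        _ ≤ ∑ q ∈ Bf, fS (q + π c0) := Finset.sum_le_sum hfiberB4
        _ ≤ S.card := hsum c0 (fun c hc => hBS c hc c0 hc0)
    have hBle : B.card ≤ SG.card + 4 * M.card := by
      rw [hBcard]
      have hstep : ∀ q ∈ Bf, fB q ≤ 1 + (if 2 ≤ fB q then 3 else 0) := by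
        intro q hq
        by_cases h : 2 ≤ fB q
        · simp only [h, if_true]; exact le_trans (hcap4 q hq) (by norm_num)
        · simp only [h, if_false]; omega
      calc ∑ q ∈ Bf, fB q ≤ ∑ q ∈ Bf, (1 + if 2 ≤ fB q then 3 else 0) :=
            Finset.sum_le_sum hstep
        _ = Bf.card + 3 * M.card := by
            rw [Finset.sum_add_distrib, Finset.sum_const, smul_eq_mul, mul_one,
              ← Finset.sum_filter, Finset.sum_const, smul_eq_mul, mul_comm, hMdef]
        _ ≤ SG.card + 4 * M.card := by omega
    omega
  · -- Case A: no full coset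
    push_neg at hfull
    have hcap3 : ∀ q ∈ Bf, fB q ≤ 3 := by
      intro q hq
      obtain ⟨c, hc, rfl⟩ := Finset.mem_image.1 hq
      rw [hfBdef]
      by_contra hcon
      push_neg at hcon
      have heq : B.filter (fun c' => π c' = π c) = {c, c + u, c + v, c + w} :=
        Finset.eq_of_subset_of_card_le (hfibsub c hc) (le_trans (hquadcard c) (by omega))
      have hmemq : ∀ z ∈ ({c, c + u, c + v, c + w} : Finset (F2 n)), z ∈ B := by
        intro z hz
        rw [← heq] at hz
        exact (Finset.mem_filter.1 hz).1
      exact hfull c hc (hmemq (c + u) (by simp)) (hmemq (c + v) (by simp))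
        (hmemq (c + w) (by simp))
    have hBle : B.card ≤ SG.card + 3 * M.card := by
      rw [hBcard]
      have hstep : ∀ q ∈ Bf, fB q ≤ 1 + (if 2 ≤ fB q then 2 else 0) := by
        intro q hq
        by_cases h : 2 ≤ fB q
        · simp only [h, if_true]; exact le_trans (hcap3 q hq) (by norm_num)
        · simp only [h, if_false]; omega
      calc ∑ q ∈ Bf, fB q ≤ ∑ q ∈ Bf, (1 + if 2 ≤ fB q then 2 else 0) :=
            Finset.sum_le_sum hstep
        _ = Bf.card + 2 * M.card := by
            rw [Finset.sum_add_distrib, Finset.sum_const, smul_eq_mul, mul_one,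
              ← Finset.sum_filter, Finset.sum_const, smul_eq_mul, mul_comm, hMdef]
        _ ≤ SG.card + 3 * M.card := by omega
    omega

/-- `F(K) ≤ K` for `K < 7/4` (Proposition 6.1): if `1 ≤ K < 7/4` and
`|A+A| ≤ K|A|`, then `A` is contained in an affine subspace of size at most
`K|A|`. -/
theorem F_small_K_first_range {n : ℕ} (K : ℝ) (hK1 : 1 ≤ K) (hK2 : K < 7 / 4)
    (A : Finset (F2 n)) (hA : A.Nonempty)
    (hdouble : ((A + A).card : ℝ) ≤ K * A.card) :
    ∃ (W : Submodule (ZMod 2) (F2 n)) (t : F2 n),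
      (↑A : Set (F2 n)) ⊆ t +ᵥ (W : Set (F2 n)) ∧
      (Nat.card W : ℝ) ≤ K * A.card := by
  classical
  obtain ⟨a0, ha0⟩ := hA
  set B : Finset (F2 n) := A.image (fun a => a + a0) with hB
  have hBA : B + B = A + A := by
    ext z
    simp only [Finset.mem_add]
    constructor
    · rintro ⟨y, hy, z', hz', rfl⟩
      rw [hB] at hy hz'
      obtain ⟨a, ha, rfl⟩ := Finset.mem_image.1 hy
      obtain ⟨a', ha', rfl⟩ := Finset.mem_image.1 hz'
      exact ⟨a, ha, a', ha', (F2_pair a a' a0).symm⟩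
    · rintro ⟨a, ha, a', ha', rfl⟩
      exact ⟨a + a0, Finset.mem_image_of_mem _ ha, a' + a0,
        Finset.mem_image_of_mem _ ha', F2_pair a a' a0⟩
  have h0B : (0 : F2 n) ∈ B := Finset.mem_image.2 ⟨a0, ha0, F2_add_self a0⟩
  have hApos : 0 < (A.card : ℝ) := by exact_mod_cast Finset.card_pos.2 ⟨a0, ha0⟩
  have hcardB : B.card = A.card := Finset.card_image_of_injective _ (add_left_injective a0)
  have hnat : 4 * (B + B).card < 7 * B.card := by
    rw [hBA, hcardB]
    have h2 : (4 * (A + A).card : ℝ) < 7 * A.card := by nlinarith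
    exact_mod_cast h2
  have key := three_mem_two B h0B hnat
  have hBsub : ∀ b ∈ B, b ∈ B + B := fun b hb => by
    have := Finset.add_mem_add hb h0B; rwa [add_zero] at this
  have hclosed : ∀ z1 ∈ B + B, ∀ z2 ∈ B + B, z1 + z2 ∈ B + B := by
    intro z1 h1 z2 h2
    rw [Finset.mem_add] at h1 h2
    obtain ⟨p, hp, q, hq, rfl⟩ := h1
    obtain ⟨r, hr, s, hs, rfl⟩ := h2
    have h3 := key p hp q hq r hr
    rw [Finset.mem_add] at h3
    obtain ⟨p', hp', q', hq', hpq⟩ := h3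
    have h4 := key p' hp' q' hq' s hs
    rwa [show p' + q' + s = p + q + (r + s) from by rw [hpq]; abel] at h4
  refine ⟨{ carrier := ↑(B + B),
            add_mem' := fun {a b} ha hb => hclosed a (Finset.mem_coe.1 ha) b (Finset.mem_coe.1 hb),
            zero_mem' := by
              have := Finset.add_mem_add h0B h0B
              rw [add_zero] at this
              exact Finset.mem_coe.2 this,
            smul_mem' := by
              intro c z hz
              rcases (by decide : ∀ a : ZMod 2, a = 0 ∨ a = 1) c with rfl|rfl
              · rw [zero_smul]
                have := Finset.add_mem_add h0B h0B
                rw [add_zero] at this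
                exact Finset.mem_coe.2 this
              · rwa [one_smul] }, a0, ?_, ?_⟩
  · intro a ha
    refine ⟨a + a0, ?_, ?_⟩
    · exact Finset.mem_coe.2 (hBsub _ (Finset.mem_image_of_mem _ ha))
    · show a0 +ᵥ (a + a0) = a
      rw [vadd_eq_add, add_comm, F2_cancel]
  · have hW : Nat.card ↥(↑(B + B) : Set (F2 n)) = (A + A).card := by
      rw [Nat.card_coe_set_eq, Set.ncard_coe_finset, hBA]
    calc (Nat.card ↥(↑(B + B) : Set (F2 n)) : ℝ) = ((A + A).card : ℝ) := by rw [hW]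
      _ ≤ K * A.card := hdouble
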